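/- arXiv:2102.02572 — 3 statements merged into one kernel-verified Lean document; each statement's English description precedes it below -/
import Mathlib

section
/- Let F, G be distribution functions and t₀ ∈ (0,1) with F(G⁻¹(t₀)) = t₀. Then t₀ is a generalized contact point between F⁻¹ and G⁻¹: either F⁻¹(t₀) = G⁻¹(t₀), or F⁻¹(t₀) < G⁻¹(t₀) ≤ F⁻¹(t₀+), where F⁻¹(t₀+) is the right limit of F⁻¹ at t₀. -/
open Set Filter MeasureTheory

/-- `quantile F t = inf {x | t ≤ F x}` is the (left-continuous) quantile function of `F`. -/
noncomputable def quantile (F : ℝ → ℝ) (t : ℝ) : ℝ := sInf {x | t ≤ F x}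

/-- `F` is a distribution function: nondecreasing, right-continuous, with limits
`0` at `-∞` and `1` at `+∞`. -/
def IsDistFun (F : ℝ → ℝ) : Prop :=
  Monotone F ∧ (∀ x, ContinuousWithinAt F (Set.Ici x) x) ∧
    Tendsto F atBot (nhds 0) ∧ Tendsto F atTop (nhds 1)

/-- `t` is a generalized contact point between the quantile functions of `F` and `G`. -/
noncomputable def ContactPoint (F G : ℝ → ℝ) (t : ℝ) : Prop :=
  quantile F t = quantile G t ∨
    (quantile F t < quantile G t ∧ quantile G t ≤ Function.rightLim (quantile F) t) ∨
    (quantile G t < quantile F t ∧ quantile F t ≤ Function.rightLim (quantile G) t)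

/-- If `F(G⁻¹(t₀)) = t₀` then `t₀` is a generalized contact point between `F⁻¹` and
`G⁻¹`: either `F⁻¹(t₀) = G⁻¹(t₀)` or `F⁻¹(t₀) < G⁻¹(t₀) ≤ F⁻¹(t₀+)`. -/
theorem contactPoint_of_FG_fixed (F G : ℝ → ℝ) (hF : IsDistFun F) (hG : IsDistFun G)
    (t₀ : ℝ) (ht₀ : t₀ ∈ Set.Ioo (0:ℝ) 1) (hfix : F (quantile G t₀) = t₀) :
    quantile F t₀ = quantile G t₀ ∨
      (quantile F t₀ < quantile G t₀ ∧
        quantile G t₀ ≤ Function.rightLim (quantile F) t₀) := by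
  obtain ⟨hFm, hFrc, hFbot, hFtop⟩ := hF
  set q := quantile G t₀ with hq
  -- key: for any t with t₀ < t < 1, q ≤ quantile F t
  have hne : ∀ t : ℝ, t < 1 → {x | t ≤ F x}.Nonempty := by
    intro t ht
    obtain ⟨x, hx⟩ := ((tendsto_order.1 hFtop).1 t ht).exists
    exact ⟨x, hx.le⟩
  have hlb : ∀ t : ℝ, t₀ < t → ∀ x ∈ {x | t ≤ F x}, q ≤ x := by
    intro t ht x hx
    by_contra h
    push_neg at h
    have : F x ≤ F q := hFm h.le
    rw [hfix] at this
    exact absurd (le_trans hx this) (not_le.2 ht)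
  have hkey : ∀ t ∈ Ioo t₀ (1:ℝ), q ≤ quantile F t := by
    intro t ht
    exact le_csInf (hne t ht.2) (hlb t ht.1)
  -- quantile F t₀ ≤ q
  have hbdd : BddBelow {x | t₀ ≤ F x} := by
    obtain ⟨y, hy⟩ := ((tendsto_order.1 hFbot).2 t₀ ht₀.1).exists
    refine ⟨y, fun x hx => ?_⟩
    by_contra h
    push_neg at h
    exact absurd (le_trans hx (hFm h.le)) (not_le.2 hy)
  have hle : quantile F t₀ ≤ q := csInf_le hbdd (by simp [hfix])
  rcases eq_or_lt_of_le hle with heq | hlt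
  · exact Or.inl heq
  · refine Or.inr ⟨hlt, ?_⟩
    -- right limit of quantile F at t₀
    have hmono : MonotoneOn (quantile F) (Ioo t₀ (1:ℝ)) := by
      intro s hs t ht hst
      exact csInf_le_csInf ⟨q, hlb s hs.1⟩ (hne t ht.2) (fun x hx => le_trans hst hx)
    have hnon : (Ioo t₀ (1:ℝ)).Nonempty := nonempty_Ioo.2 ht₀.2
    have himbdd : BddBelow (quantile F '' Ioo t₀ (1:ℝ)) := by
      refine ⟨q, fun y hy => ?_⟩
      obtain ⟨t, ht, rfl⟩ := hy
      exact hkey t ht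
    have htend := MonotoneOn.tendsto_nhdsWithin_Ioo_right hnon hmono himbdd
    have hrl : Function.rightLim (quantile F) t₀ = sInf (quantile F '' Ioo t₀ (1:ℝ)) :=
      rightLim_eq_of_tendsto (h := nhdsGT_neBot t₀) htend
    rw [hrl]
    refine le_csInf (hnon.image _) ?_
    rintro y ⟨t, ht, rfl⟩
    exact hkey t ht
end

section
/- Let F, G be distribution functions and t₀ ∈ (0,1). The virtual contact condition F_G(t₀) < t₀ ≤ F_G(t₀+) (where F_G = F∘G⁻¹ and F_G(t₀+) is the right limit) holds if and only if G⁻¹(t₀) < F⁻¹(t₀) ≤ G⁻¹(t₀+). -/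
open Set Filter MeasureTheory
open scoped Topology

lemma isdf_nonempty {F : ℝ → ℝ} (hF : IsDistFun F) {t : ℝ} (ht : t < 1) :
    {x | t ≤ F x}.Nonempty := by
  obtain ⟨x, hx⟩ := (hF.2.2.2.eventually (eventually_gt_nhds ht)).exists
  exact ⟨x, hx.le⟩

lemma isdf_bddBelow {F : ℝ → ℝ} (hF : IsDistFun F) {t : ℝ} (ht : 0 < t) :
    BddBelow {x | t ≤ F x} := by
  obtain ⟨y, hy⟩ := (eventually_atBot.1 (hF.2.2.1.eventually (eventually_lt_nhds ht)))
  exact ⟨y, fun x hx => le_of_not_gt fun h => absurd hx (not_le.2 (hy x h.le))⟩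

lemma le_apply_quantile {F : ℝ → ℝ} (hF : IsDistFun F) {t : ℝ} (ht : 0 < t) (ht1 : t < 1) :
    t ≤ F (quantile F t) := by
  have hne := isdf_nonempty hF ht1
  have hgt : ∀ y ∈ Ioi (quantile F t), t ≤ F y := by
    intro y hy
    obtain ⟨x, hx, hxy⟩ := exists_lt_of_csInf_lt hne hy
    exact le_trans hx (hF.1 hxy.le)
  have h1 : Tendsto F (𝓝[>] (quantile F t)) (𝓝 (F (quantile F t))) :=
    (hF.2.1 _).mono_left (nhdsWithin_mono _ Ioi_subset_Ici_self)
  exact ge_of_tendsto h1 (eventually_nhdsWithin_of_forall hgt)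

lemma quantile_le_iff {F : ℝ → ℝ} (hF : IsDistFun F) {t x : ℝ} (ht : 0 < t) (ht1 : t < 1) :
    quantile F t ≤ x ↔ t ≤ F x :=
  ⟨fun h => (le_apply_quantile hF ht ht1).trans (hF.1 h),
   fun h => csInf_le (isdf_bddBelow hF ht) h⟩

lemma quantile_mono {G : ℝ → ℝ} (hG : IsDistFun G) {s u : ℝ} (hs : 0 < s) (hsu : s ≤ u)
    (hu : u < 1) : quantile G s ≤ quantile G u :=
  csInf_le_csInf (isdf_bddBelow hG hs) (isdf_nonempty hG hu) (fun _ hx => hsu.trans hx)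

/-- The virtual contact condition `F_G(t₀) < t₀ ≤ F_G(t₀+)` holds iff
`G⁻¹(t₀) < F⁻¹(t₀) ≤ G⁻¹(t₀+)`. -/
theorem virtual_contact_iff (F G : ℝ → ℝ) (hF : IsDistFun F) (hG : IsDistFun G)
    (t₀ : ℝ) (ht₀ : t₀ ∈ Set.Ioo (0:ℝ) 1) :
    (F (quantile G t₀) < t₀ ∧
        t₀ ≤ Function.rightLim (fun s => F (quantile G s)) t₀) ↔
      (quantile G t₀ < quantile F t₀ ∧
        quantile F t₀ ≤ Function.rightLim (quantile G) t₀) := by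
  obtain ⟨ht0, ht1⟩ := ht₀
  set q : ℝ := sInf (quantile G '' Ioo t₀ 1) with hqdef
  have hq_lb : ∀ u ∈ Ioo t₀ 1, quantile G t₀ ≤ quantile G u := fun u hu =>
    quantile_mono hG ht0 hu.1.le hu.2
  have himg_ne : (quantile G '' Ioo t₀ 1).Nonempty :=
    (Set.nonempty_Ioo.2 ht1).image _
  have himg_bdd : BddBelow (quantile G '' Ioo t₀ 1) :=
    ⟨quantile G t₀, by rintro _ ⟨u, hu, rfl⟩; exact hq_lb u hu⟩
  have hq_le : ∀ u ∈ Ioo t₀ 1, q ≤ quantile G u := fun u hu => csInf_le himg_bdd ⟨u, hu, rfl⟩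
  have htend : Tendsto (quantile G) (𝓝[>] t₀) (𝓝 q) := by
    rw [tendsto_order]
    constructor
    · intro b hb
      filter_upwards [Ioo_mem_nhdsGT_of_mem ⟨le_refl t₀, ht1⟩] with u hu
      exact hb.trans_le (hq_le u hu)
    · intro b hb
      obtain ⟨_, ⟨s, hs, rfl⟩, hsb⟩ := exists_lt_of_csInf_lt himg_ne hb
      filter_upwards [Ioo_mem_nhdsGT_of_mem ⟨le_refl t₀, hs.1⟩] with u hu
      exact (quantile_mono hG (ht0.trans hu.1) hu.2.le hs.2).trans_lt hsb
  have hne : (𝓝[>] t₀ : Filter ℝ) ≠ ⊥ := (nhdsGT_neBot t₀).ne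
  have hrlG : Function.rightLim (quantile G) t₀ = q := rightLim_eq_of_tendsto htend
  have htendF : Tendsto (fun s => F (quantile G s)) (𝓝[>] t₀) (𝓝 (F q)) := by
    have h2 : Tendsto (quantile G) (𝓝[>] t₀) (𝓝[Set.Ici q] q) := by
      rw [tendsto_nhdsWithin_iff]
      refine ⟨htend, ?_⟩
      filter_upwards [Ioo_mem_nhdsGT_of_mem ⟨le_refl t₀, ht1⟩] with u hu
      exact hq_le u hu
    exact (hF.2.1 q).tendsto.comp h2
  have hrlF : Function.rightLim (fun s => F (quantile G s)) t₀ = F q :=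
    rightLim_eq_of_tendsto htendF
  rw [hrlG, hrlF]
  have h1 : F (quantile G t₀) < t₀ ↔ quantile G t₀ < quantile F t₀ := by
    rw [lt_iff_not_ge, lt_iff_not_ge, quantile_le_iff hF ht0 ht1]
  exact and_congr h1 (quantile_le_iff hF ht0 ht1).symm
end

section
/- Let B be a standard Brownian bridge on [0,1] and A ⊂ [0,1] a Borel set. Then the random variable ℓ({t ∈ A : B(t) > 0}) is almost surely constant if and only if ℓ(A) = 0, where ℓ is Lebesgue measure. -/
open Set Filter MeasureTheory ProbabilityTheory
open scoped NNReal ENNReal Topology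

/-! ### Auxiliary facts about the one-dimensional Gaussian measure -/

private lemma max_meas' : Measurable (fun x : ℝ => max x 0) := measurable_id.max measurable_const

private lemma gauss_integrable_id (v : ℝ≥0) :
    Integrable (fun x : ℝ => x) (gaussianReal 0 v) := by
  by_cases hv : v = 0
  · rw [hv, gaussianReal_zero_var]
    refine (integrable_congr ?_).mpr (integrable_const (0:ℝ))
    rw [Filter.EventuallyEq, MeasureTheory.ae_dirac_iff (by exact measurableSet_eq)]
  rw [gaussianReal_of_var_ne_zero _ hv, integrable_withDensity_iff (measurable_gaussianPDF _ _)
    (Filter.Eventually.of_forall fun x => ENNReal.ofReal_lt_top)]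
  have hv' : (0:ℝ) < (v:ℝ) := by positivity
  have h0 : (0:ℝ) < (2 * (v:ℝ))⁻¹ := by positivity
  have := (integrable_rpow_mul_exp_neg_mul_sq h0 (by norm_num : (-1:ℝ) < 1)).const_mul
    (√(2 * Real.pi * v))⁻¹
  refine this.congr (Filter.Eventually.of_forall fun x => ?_)
  simp only [gaussianPDF, gaussianPDFReal, sub_zero, Real.rpow_one]
  rw [ENNReal.toReal_ofReal (by positivity)]
  rw [show -(2 * (v:ℝ))⁻¹ * x ^ 2 = -(x ^ 2 / (2 * v)) by ring]
  ring

private lemma gauss_integrable_max (v : ℝ≥0) :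
    Integrable (fun x : ℝ => max x 0) (gaussianReal 0 v) := by
  refine (gauss_integrable_id v).mono max_meas'.aestronglyMeasurable ?_
  refine Filter.Eventually.of_forall fun x => ?_
  simp only [Real.norm_eq_abs]
  rcases le_total x 0 with h | h
  · rw [max_eq_right h]; simpa using abs_nonneg x
  · rw [max_eq_left h]

private lemma gauss_neg_map (v : ℝ≥0) :
    (gaussianReal 0 v).map (fun x => -x) = gaussianReal 0 v := by
  have h := gaussianReal_map_const_mul (μ := 0) (v := v) (-1)
  rw [show ((-1 : ℝ) * ·) = (fun x : ℝ => -x) from funext fun x => by ring] at h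
  rw [h]
  congr 1
  · ring
  · refine NNReal.coe_injective ?_; push_cast; norm_num

private lemma gauss_mean_zero (v : ℝ≥0) : ∫ x, x ∂(gaussianReal 0 v) = 0 := by
  have h := gauss_neg_map v
  have h2 : ∫ x, x ∂(gaussianReal 0 v) = ∫ x, -x ∂(gaussianReal 0 v) := by
    conv_lhs => rw [← h]
    rw [integral_map (f := fun x : ℝ => x) measurable_neg.aemeasurable
      measurable_id.aestronglyMeasurable]
  rw [integral_neg] at h2
  linarith

private lemma gauss_sing (v : ℝ≥0) (hv : v ≠ 0) : gaussianReal 0 v {0} = 0 :=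
  gaussianReal_absolutelyContinuous 0 hv (by simp [Real.volume_singleton])

private lemma gauss_Ioi_pos (v : ℝ≥0) (hv : v ≠ 0) : 0 < gaussianReal 0 v (Ioi 0) := by
  by_contra h
  push_neg at h
  have h1 : gaussianReal 0 v (Ioi 0) = 0 := le_antisymm h bot_le
  have h2 : gaussianReal 0 v (Iio 0) = 0 := by
    calc gaussianReal 0 v (Iio 0)
        = ((gaussianReal 0 v).map (fun x => -x)) (Iio 0) := by rw [gauss_neg_map]
      _ = gaussianReal 0 v ((fun x : ℝ => -x) ⁻¹' (Iio 0)) := by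
          rw [Measure.map_apply (by fun_prop) measurableSet_Iio]
      _ = gaussianReal 0 v (Ioi 0) := by congr 1; ext x; simp
      _ = 0 := h1
  have huniv : (univ : Set ℝ) ⊆ Iio 0 ∪ ({0} ∪ Ioi 0) := by
    intro x _
    rcases lt_trichotomy x 0 with h | h | h <;> simp [h]
  have : gaussianReal 0 v univ = 0 :=
    measure_mono_null huniv (measure_union_null h2 (measure_union_null (gauss_sing v hv) h1))
  simp at this

/-- The positive-part first moment of the standard Gaussian. -/
private noncomputable def gaussKappa : ℝ := ∫ x, max x 0 ∂(gaussianReal (0:ℝ) 1)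

private lemma gaussKappa_pos : 0 < gaussKappa := by
  rw [gaussKappa, integral_pos_iff_support_of_nonneg (fun x => le_max_right x 0)
    (gauss_integrable_max 1)]
  have : Function.support (fun x : ℝ => max x 0) = Ioi 0 := by
    ext x
    simp only [Function.mem_support, mem_Ioi]
    constructor
    · intro hx
      by_contra hx'
      push_neg at hx'
      exact hx (max_eq_right hx')
    · intro hx
      rw [max_eq_left hx.le]
      exact ne_of_gt hx
  rw [this]
  exact gauss_Ioi_pos 1 one_ne_zero

private lemma gauss_plus (v : ℝ) (hv : 0 ≤ v) :
    ∫ x, max x 0 ∂(gaussianReal 0 v.toNNReal) = Real.sqrt v * gaussKappa := by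
  have h := gaussianReal_map_const_mul (μ := 0) (v := 1) (√v)
  have h3 : (gaussianReal (0:ℝ) 1).map ((√v) * ·) = gaussianReal 0 v.toNNReal := by
    rw [h]
    congr 1
    · ring
    · refine NNReal.coe_injective ?_
      push_cast
      simp [Real.sq_sqrt hv, Real.coe_toNNReal _ hv]
  rw [← h3, integral_map (by fun_prop) max_meas'.aestronglyMeasurable]
  have : ∀ x : ℝ, max (√v * x) 0 = √v * max x 0 := fun x => by
    rw [mul_max_of_nonneg _ _ (Real.sqrt_nonneg v), mul_zero]
  simp_rw [this]
  rw [integral_const_mul]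
  rfl

/-- `B` is a standard Brownian bridge on `[0,1]` under the probability measure `P`:
a measurable process with continuous paths on `[0,1]`, vanishing at `0` and `1`,
which is a centered Gaussian process with covariance `min s t - s * t` (expressed
through the law of finite linear combinations). -/
structure IsBrownianBridge {Ω : Type*} [MeasurableSpace Ω] (P : Measure Ω)
    (B : Ω → ℝ → ℝ) : Prop where
  cont : ∀ ω, ContinuousOn (B ω) (Set.Icc 0 1)
  zero : ∀ ω, B ω 0 = 0 ∧ B ω 1 = 0
  meas : ∀ t, Measurable fun ω => B ω t
  gauss : ∀ (n : ℕ) (c : Fin n → ℝ) (t : Fin n → ℝ), (∀ i, t i ∈ Set.Icc (0:ℝ) 1) →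
    P.map (fun ω => ∑ i, c i * B ω (t i)) =
      gaussianReal 0 (∑ i, ∑ j, c i * c j * (min (t i) (t j) - t i * t j)).toNNReal

section Aux

variable {Ω : Type*} [MeasurableSpace Ω] {P : Measure Ω} {B : Ω → ℝ → ℝ}

private lemma integrable_comp_of_law {φ : Ω → ℝ} (hφ : Measurable φ) {w : ℝ≥0}
    (hlaw : P.map φ = gaussianReal 0 w) {f : ℝ → ℝ} (hf : Measurable f)
    (hi : Integrable f (gaussianReal 0 w)) : Integrable (fun ω => f (φ ω)) P := by
  rw [← hlaw] at hi
  exact (integrable_map_measure hf.aestronglyMeasurable hφ.aemeasurable).mp hi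

private lemma integral_comp_of_law {φ : Ω → ℝ} (hφ : Measurable φ) {w : ℝ≥0}
    (hlaw : P.map φ = gaussianReal 0 w) {f : ℝ → ℝ} (hf : Measurable f) :
    ∫ ω, f (φ ω) ∂P = ∫ x, f x ∂(gaussianReal 0 w) := by
  rw [← hlaw, integral_map hφ.aemeasurable hf.aestronglyMeasurable]

/-- Law of `a • B t + b • B m`. -/
private lemma bb_law2 (hB : IsBrownianBridge P B) {t m : ℝ} (ht : t ∈ Set.Icc (0:ℝ) 1)
    (hm : m ∈ Set.Icc (0:ℝ) 1) (a b : ℝ) :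
    P.map (fun ω => a * B ω t + b * B ω m) =
      gaussianReal 0 ((t - t*t) * a^2 + 2*a*b*(min t m - t*m) + (m - m*m) * b^2).toNNReal := by
  have h := hB.gauss 2 ![a, b] ![t, m] (by
    intro i
    fin_cases i <;> simpa)
  simp only [Fin.sum_univ_two, Matrix.cons_val_zero, Matrix.cons_val_one, Matrix.head_cons] at h
  rw [h]
  congr 2
  rw [min_self, min_self, min_comm m t]
  ring

/-- Law of `B t`. -/
private lemma bb_law1 (hB : IsBrownianBridge P B) {t : ℝ} (ht : t ∈ Set.Icc (0:ℝ) 1) :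
    P.map (fun ω => B ω t) = gaussianReal 0 (t - t*t).toNNReal := by
  have h := bb_law2 hB ht ht 1 0
  have h1 : (fun ω => 1 * B ω t + 0 * B ω t) = fun ω => B ω t := by
    funext ω; ring
  have h2 : (t - t*t) * 1^2 + 2*1*0*(min t t - t*t) + (t - t*t) * 0^2 = t - t*t := by ring
  rwa [h1, h2] at h

/-- Joint measurability of the (clamped) Brownian bridge. -/
private lemma bb_jointMeas (hB : IsBrownianBridge P B) :
    Measurable (fun p : Ω × ℝ => B p.1 (min 1 (max 0 p.2))) := by
  have key : Measurable (Function.uncurry fun t ω => B ω (min 1 (max 0 t))) := by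
    refine measurable_uncurry_of_continuous_of_measurable (fun ω => ?_) (fun t => hB.meas _)
    refine (hB.cont ω).comp_continuous
      (continuous_const.min (continuous_const.max continuous_id)) fun t => ?_
    exact ⟨le_min zero_le_one (le_max_left 0 t), min_le_left _ _⟩
  exact key.comp measurable_swap

/-- Key positivity: `E[1_{B t > 0} · B m] > 0` for `t, m` in the open unit interval. -/
private lemma bb_cross_pos [IsProbabilityMeasure P] (hB : IsBrownianBridge P B)
    {t m : ℝ} (ht : t ∈ Set.Ioo (0:ℝ) 1) (hm : m ∈ Set.Ioo (0:ℝ) 1) :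
    0 < ∫ ω, (if 0 < B ω t then B ω m else 0) ∂P := by
  set X : Ω → ℝ := fun ω => B ω t with hXdef
  set Y : Ω → ℝ := fun ω => B ω m with hYdef
  have hXm : Measurable X := hB.meas t
  have hYm : Measurable Y := hB.meas m
  set vt : ℝ := t - t*t with hvtdef
  set vm : ℝ := m - m*m with hvmdef
  set c : ℝ := min t m - t*m with hcdef
  have hvt : 0 < vt := by nlinarith [ht.1, ht.2]
  have hvm : 0 < vm := by nlinarith [hm.1, hm.2]
  have hc : 0 < c := by
    rcases le_total t m with h | h
    · rw [hcdef, min_eq_left h]; nlinarith [ht.1, hm.2]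
    · rw [hcdef, min_eq_right h]; nlinarith [hm.1, ht.2]
  set q : ℝ → ℝ := fun ε => vt + 2*c*ε + vm*ε^2 with hqdef
  have hlawε : ∀ ε : ℝ, P.map (fun ω => X ω + ε * Y ω) = gaussianReal 0 (q ε).toNNReal := by
    intro ε
    have h := bb_law2 hB (Set.mem_Icc_of_Ioo ht) (Set.mem_Icc_of_Ioo hm) 1 ε
    have h1 : (fun ω => 1 * B ω t + ε * B ω m) = fun ω => X ω + ε * Y ω := by
      funext ω; simp [hXdef, hYdef]
    have h2 : (t - t*t) * 1^2 + 2*1*ε*(min t m - t*m) + (m - m*m) * ε^2 = q ε := by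
      simp only [hqdef, hvtdef, hvmdef, hcdef]; ring
    rw [h1, h2] at h
    exact h
  have hq0 : q 0 = vt := by simp [hqdef]
  have hlawX : P.map X = gaussianReal 0 vt.toNNReal := by
    have := hlawε 0
    simpa [hq0] using this
  have hXne : ∀ᵐ ω ∂P, X ω ≠ 0 := by
    have hmeas0 : MeasurableSet ({0} : Set ℝ) := measurableSet_singleton 0
    have : P (X ⁻¹' {0}) = 0 := by
      rw [← Measure.map_apply hXm hmeas0, hlawX]
      exact gauss_sing _ (by simp [hvt, hvt.le, Real.toNNReal_eq_zero, not_le, hvt])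
    rw [ae_iff]
    convert this using 2
    ext ω
    simp
  have hIntY : Integrable Y P := by
    have hlawY : P.map Y = gaussianReal 0 vm.toNNReal := by
      have h := bb_law2 hB (Set.mem_Icc_of_Ioo ht) (Set.mem_Icc_of_Ioo hm) 0 1
      have h1 : (fun ω => 0 * B ω t + 1 * B ω m) = Y := by
        funext ω; simp [hYdef]
      have h2 : (t - t*t) * 0^2 + 2*0*1*(min t m - t*m) + (m - m*m) * 1^2 = vm := by ring
      rwa [h1, h2] at h
    have := integrable_comp_of_law hYm hlawY measurable_id (gauss_integrable_id _)
    simpa using this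
  have hIntMax : ∀ ε : ℝ, Integrable (fun ω => max (X ω + ε * Y ω) 0) P := fun ε =>
    integrable_comp_of_law (hXm.add (hYm.const_mul ε)) (hlawε ε) max_meas'
      (gauss_integrable_max _)
  have hH : ∀ ε : ℝ, 0 ≤ q ε →
      ∫ ω, max (X ω + ε * Y ω) 0 ∂P = √(q ε) * gaussKappa := fun ε hε => by
    rw [integral_comp_of_law (φ := fun ω => X ω + ε * Y ω) (hXm.add (hYm.const_mul ε)) (hlawε ε) max_meas', gauss_plus _ hε]
  set ε₀ : ℝ := min 1 (vt / (2 * |c| + 1)) with hε₀def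
  have hε₀pos : 0 < ε₀ := by
    apply lt_min one_pos
    positivity
  set eps : ℕ → ℝ := fun n => ε₀ * (1 / (n + 1)) with hepsdef
  have heps_pos : ∀ n, 0 < eps n := fun n => by positivity
  have heps_le : ∀ n, eps n ≤ ε₀ := fun n => by
    have h : 1/((n:ℝ)+1) ≤ 1 := by
      rw [div_le_one (by positivity)]
      linarith [Nat.cast_nonneg (α := ℝ) n]
    calc eps n = ε₀ * (1/((n:ℝ)+1)) := rfl
    _ ≤ ε₀ * 1 := by nlinarith [hε₀pos]
    _ = ε₀ := mul_one _
  have hq_pos : ∀ n, 0 < q (eps n) := by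
    intro n
    have h1 : eps n ≤ vt / (2 * |c| + 1) := (heps_le n).trans (min_le_right _ _)
    have h2 : 0 < eps n := heps_pos n
    have h3 : -|c| ≤ c := neg_abs_le c
    have h4 : 0 ≤ |c| := abs_nonneg c
    have h5 : eps n * (2 * |c| + 1) ≤ vt := by
      rw [← le_div_iff₀ (by positivity)]
      exact h1
    have h6 : 0 < vt + 2*c*(eps n) := by nlinarith
    have hsq : 0 ≤ vm * (eps n)^2 := by positivity
    show 0 < vt + 2*c*(eps n) + vm*(eps n)^2
    nlinarith
  have heps_tendsto : Tendsto eps atTop (𝓝 0) := by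
    have := tendsto_one_div_add_atTop_nhds_zero_nat.const_mul ε₀
    simpa [hepsdef] using this
  set s : ℝ → ℝ := fun ε => √(q ε) * gaussKappa with hsdef
  have hq' : HasDerivAt q (2*c) 0 := by
    have h1 : HasDerivAt (fun ε : ℝ => vt + 2*c*ε) (2*c*1) 0 :=
      ((hasDerivAt_id (0:ℝ)).const_mul (2*c)).const_add vt
    have h2 : HasDerivAt (fun ε : ℝ => vm * ε^2) (vm * (2*(0:ℝ)^1)) 0 :=
      (hasDerivAt_pow 2 (0:ℝ)).const_mul vm
    have := h1.add h2
    simpa [hqdef, Pi.add_def] using this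
  have hs' : HasDerivAt s (1/(2*√vt) * (2*c) * gaussKappa) 0 := by
    have hne : q 0 ≠ 0 := by rw [hq0]; exact hvt.ne'
    have hsq := (Real.hasDerivAt_sqrt hne).comp 0 hq'
    rw [hq0] at hsq
    exact hsq.mul_const gaussKappa
  set L : ℝ := 1/(2*√vt) * (2*c) * gaussKappa with hLdef
  have hLpos : 0 < L := by
    have := gaussKappa_pos
    have h1 : 0 < √vt := Real.sqrt_pos.mpr hvt
    positivity
  have hslope : Tendsto (fun n => (s (eps n) - s 0) / eps n) atTop (𝓝 L) := by
    have h1 : Tendsto eps atTop (𝓝[≠] 0) := by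
      refine tendsto_nhdsWithin_of_tendsto_nhds_of_eventually_within _ heps_tendsto ?_
      exact Eventually.of_forall fun n => (heps_pos n).ne'
    have h2 := (hasDerivAt_iff_tendsto_slope.mp hs').comp h1
    refine h2.congr fun n => ?_
    simp [slope_def_field, Function.comp]
  set F : ℕ → Ω → ℝ := fun n ω => (max (X ω + eps n * Y ω) 0 - max (X ω) 0) / eps n with hFdef
  have hintF : ∀ n, ∫ ω, F n ω ∂P = (s (eps n) - s 0) / eps n := by
    intro n
    rw [hFdef]
    simp only
    rw [integral_div, integral_sub (hIntMax (eps n)) ?h0]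
    · congr 2
      · exact hH (eps n) (hq_pos n).le
      · have := hH 0 (by rw [hq0]; exact hvt.le)
        simp only [zero_mul, add_zero] at this
        rw [this, hsdef]
    · have := hIntMax 0
      simpa using this
  have hFmeas : ∀ n, AEStronglyMeasurable (F n) P := by
    intro n
    apply Measurable.aestronglyMeasurable
    exact (((hXm.add (hYm.const_mul (eps n))).max measurable_const).sub
      (hXm.max measurable_const)).div_const _
  have hbound : ∀ n, ∀ᵐ ω ∂P, ‖F n ω‖ ≤ |Y ω| := by
    intro n
    refine Eventually.of_forall fun ω => ?_
    have h1 := abs_max_sub_max_le_abs (X ω + eps n * Y ω) (X ω) 0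
    have h2 : |X ω + eps n * Y ω - X ω| = eps n * |Y ω| := by
      rw [add_sub_cancel_left, abs_mul, abs_of_pos (heps_pos n)]
    rw [Real.norm_eq_abs, hFdef]
    simp only
    rw [abs_div, abs_of_pos (heps_pos n), div_le_iff₀ (heps_pos n)]
    rw [h2] at h1
    linarith [h1]
  have hlim : ∀ᵐ ω ∂P, Tendsto (fun n => F n ω) atTop (𝓝 (if 0 < X ω then Y ω else 0)) := by
    filter_upwards [hXne] with ω hω
    have htend : Tendsto (fun n => X ω + eps n * Y ω) atTop (𝓝 (X ω)) := by
      have := (heps_tendsto.mul_const (Y ω)).const_add (X ω)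
      simpa only [zero_mul, add_zero] using this
    rcases hω.lt_or_gt with hneg | hpos
    · rw [if_neg (not_lt.mpr hneg.le)]
      have hev : ∀ᶠ n in atTop, X ω + eps n * Y ω < 0 :=
        htend.eventually (eventually_lt_nhds hneg)
      refine Tendsto.congr' ?_ tendsto_const_nhds
      filter_upwards [hev] with n hn
      rw [hFdef]
      simp only
      rw [max_eq_right hn.le, max_eq_right hneg.le, sub_zero, zero_div]
    · rw [if_pos hpos]
      have hev : ∀ᶠ n in atTop, 0 < X ω + eps n * Y ω :=
        htend.eventually (eventually_gt_nhds hpos)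
      refine Tendsto.congr' ?_ tendsto_const_nhds
      filter_upwards [hev] with n hn
      rw [hFdef]
      simp only
      rw [max_eq_left hn.le, max_eq_left hpos.le]
      field_simp
      rw [add_sub_cancel_left, mul_div_cancel_right₀ _ (heps_pos n).ne']
  have hYabs : Integrable (fun ω => |Y ω|) P := hIntY.abs
  have hDCT := tendsto_integral_of_dominated_convergence _ hFmeas hYabs hbound hlim
  have hEq : Tendsto (fun n => (s (eps n) - s 0) / eps n) atTop
      (𝓝 (∫ ω, (if 0 < X ω then Y ω else 0) ∂P)) := by
    refine hDCT.congr fun n => (hintF n)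
  have := tendsto_nhds_unique hEq hslope
  rw [this]
  exact hLpos

end Aux

/-- For a Borel set `A ⊆ [0,1]`, the occupation time `ℓ {t ∈ A : B t > 0}` is almost
surely constant iff `ℓ(A) = 0`. -/
theorem brownianBridge_occupation_constant_iff {Ω : Type*} [MeasurableSpace Ω]
    (P : Measure Ω) [IsProbabilityMeasure P] (B : Ω → ℝ → ℝ)
    (hB : IsBrownianBridge P B)
    (A : Set ℝ) (hA : MeasurableSet A) (hA1 : A ⊆ Set.Icc 0 1) :
    (∃ c : ENNReal, ∀ᵐ ω ∂P, volume {t ∈ A | 0 < B ω t} = c) ↔ volume A = 0 := by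
  constructor
  · rintro ⟨c, hc⟩
    by_contra hA0
    set m : ℝ := 1/2 with hmdef
    have hmIoo : m ∈ Set.Ioo (0:ℝ) 1 := by constructor <;> norm_num
    set A' : Set ℝ := A ∩ Ioo 0 1 with hA'def
    have hA'sub : A' ⊆ Ioo 0 1 := fun t ht => ht.2
    have hA'm : MeasurableSet A' := hA.inter measurableSet_Ioo
    have hA'vol : volume A' ≠ 0 := by
      intro h0
      apply hA0
      have hsub : A ⊆ A' ∪ ({0} ∪ {1}) := by
        intro x hx
        rcases hA1 hx with ⟨h0x, h1x⟩
        rcases eq_or_lt_of_le h0x with h | h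
        · exact Or.inr (Or.inl (by simp [← h]))
        rcases eq_or_lt_of_le h1x with h' | h'
        · exact Or.inr (Or.inr (by simp [h']))
        · exact Or.inl ⟨hx, h, h'⟩
      refine measure_mono_null hsub ?_
      refine measure_union_null h0 (measure_union_null ?_ ?_) <;> exact Real.volume_singleton
    set μ : Measure ℝ := volume.restrict (Ioo 0 1) with hμdef
    haveI hμprob : IsProbabilityMeasure μ := by
      constructor
      rw [hμdef, Measure.restrict_apply_univ, Real.volume_Ioo]
      norm_num
    have hC : Measurable (fun p : Ω × ℝ => B p.1 (min 1 (max 0 p.2))) := bb_jointMeas hB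
    have hclamp : ∀ t ∈ Ioo (0:ℝ) 1, min 1 (max 0 t) = t := by
      intro t ht
      rw [max_eq_right ht.1.le, min_eq_right ht.2.le]
    set S : Set (Ω × ℝ) := {p | p.2 ∈ A' ∧ 0 < B p.1 p.2} with hSdef
    have hSmeas : MeasurableSet S := by
      have : S = {p : Ω × ℝ | p.2 ∈ A'} ∩ {p : Ω × ℝ | 0 < B p.1 (min 1 (max 0 p.2))} := by
        ext p
        simp only [hSdef, Set.mem_inter_iff, Set.mem_setOf_eq]
        constructor
        · rintro ⟨h1, h2⟩
          exact ⟨h1, by rwa [hclamp p.2 h1.2]⟩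
        · rintro ⟨h1, h2⟩
          exact ⟨h1, by rwa [hclamp p.2 h1.2] at h2⟩
      rw [this]
      exact (hA'm.preimage measurable_snd).inter (measurableSet_lt measurable_const hC)
    set N : Ω × ℝ → ℝ := S.indicator (fun p => B p.1 m) with hNdef
    have hNmeas : Measurable N := ((hB.meas m).comp measurable_fst).indicator hSmeas
    have hYm : Measurable (fun ω => B ω m) := hB.meas m
    have hIntY : Integrable (fun ω => B ω m) P := by
      have := integrable_comp_of_law hYm (bb_law1 hB (Set.mem_Icc_of_Ioo hmIoo))
        measurable_id (gauss_integrable_id _)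
      simpa using this
    have hmapfst : Measure.map Prod.fst (P.prod μ) = P := by
      rw [Measure.map_fst_prod]
      simp
    have hg : Integrable (fun p : Ω × ℝ => B p.1 m) (P.prod μ) := by
      have h2 : Integrable (fun ω => B ω m) (Measure.map Prod.fst (P.prod μ)) := by
        rwa [hmapfst]
      exact (integrable_map_measure hYm.aestronglyMeasurable
        measurable_fst.aemeasurable).mp h2
    have hNint : Integrable N (P.prod μ) := by
      refine hg.norm.mono' hNmeas.aestronglyMeasurable ?_
      refine Eventually.of_forall fun p => ?_
      rw [hNdef]
      exact norm_indicator_le_norm_self _ _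
    -- per-ω sections of S
    have hSsec : ∀ ω, MeasurableSet {t | t ∈ A' ∧ 0 < B ω t} := by
      intro ω
      have hopen : IsOpen {t | t ∈ Ioo (0:ℝ) 1 ∧ 0 < B ω t} := by
        have h := ((hB.cont ω).mono Ioo_subset_Icc_self).isOpen_inter_preimage
          (t := Ioi 0) isOpen_Ioo isOpen_Ioi
        convert h using 1
        rfl
      have heq : {t | t ∈ A' ∧ 0 < B ω t} = A ∩ {t | t ∈ Ioo (0:ℝ) 1 ∧ 0 < B ω t} := by
        ext t
        simp only [hA'def, Set.mem_setOf_eq, Set.mem_inter_iff]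
        tauto
      rw [heq]
      exact hA.inter hopen.measurableSet
    have hvol_eq : ∀ ω, volume {t | t ∈ A' ∧ 0 < B ω t} = volume {t ∈ A | 0 < B ω t} := by
      intro ω
      apply le_antisymm
      · exact measure_mono fun t ht => ⟨ht.1.1, ht.2⟩
      · have hsub : {t ∈ A | 0 < B ω t} ⊆ {t | t ∈ A' ∧ 0 < B ω t} ∪ ({0} ∪ {1}) := by
          rintro x ⟨hxA, hxB⟩
          rcases hA1 hxA with ⟨h0x, h1x⟩
          rcases eq_or_lt_of_le h0x with h | h
          · exact Or.inr (Or.inl (by simp [← h]))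
          rcases eq_or_lt_of_le h1x with h' | h'
          · exact Or.inr (Or.inr (by simp [h']))
          · exact Or.inl ⟨⟨hxA, h, h'⟩, hxB⟩
        calc volume {t ∈ A | 0 < B ω t}
            ≤ volume ({t | t ∈ A' ∧ 0 < B ω t} ∪ ({0} ∪ {1})) := measure_mono hsub
          _ ≤ volume {t | t ∈ A' ∧ 0 < B ω t} + volume (({0} : Set ℝ) ∪ {1}) :=
              measure_union_le _ _
          _ = volume {t | t ∈ A' ∧ 0 < B ω t} := by
              rw [measure_union_null Real.volume_singleton Real.volume_singleton, add_zero]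
    -- c is finite
    have hcfin : c ≠ ⊤ := by
      obtain ⟨ω₀, hω₀⟩ := hc.exists
      intro htop
      rw [htop] at hω₀
      have : volume {t ∈ A | 0 < B ω₀ t} ≤ volume (Icc (0:ℝ) 1) :=
        measure_mono fun t ht => hA1 ht.1
      rw [hω₀, Real.volume_Icc] at this
      simp at this
    -- inner integral over t for fixed ω
    have hinner : ∀ ω, ∫ t, N (ω, t) ∂μ =
        (volume {t | t ∈ A' ∧ 0 < B ω t}).toReal * B ω m := by
      intro ω
      have h1 : (fun t => N (ω, t)) =
          Set.indicator {t | t ∈ A' ∧ 0 < B ω t} (fun _ => B ω m) := by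
        funext t
        rw [hNdef]
        by_cases h : t ∈ A' ∧ 0 < B ω t
        · rw [Set.indicator_of_mem (show (ω, t) ∈ S from h),
            Set.indicator_of_mem (show t ∈ {t | t ∈ A' ∧ 0 < B ω t} from h)]
        · rw [Set.indicator_of_notMem (show (ω, t) ∉ S from h),
            Set.indicator_of_notMem (show t ∉ {t | t ∈ A' ∧ 0 < B ω t} from h)]
      rw [h1, integral_indicator_const _ (hSsec ω), smul_eq_mul]
      rw [measureReal_def]
      congr 2
      rw [hμdef, Measure.restrict_apply (hSsec ω),
        Set.inter_eq_self_of_subset_left (fun t ht => ht.1.2)]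
    have hLHS : ∫ ω, (∫ t, N (ω, t) ∂μ) ∂P = 0 := by
      have hae : (fun ω => ∫ t, N (ω, t) ∂μ) =ᵐ[P] fun ω => c.toReal * B ω m := by
        filter_upwards [hc] with ω hω
        rw [hinner ω, hvol_eq ω, hω]
      rw [integral_congr_ae hae, integral_const_mul]
      have hmean : ∫ ω, B ω m ∂P = 0 := by
        have := integral_comp_of_law hYm (bb_law1 hB (Set.mem_Icc_of_Ioo hmIoo)) measurable_id
        simpa [gauss_mean_zero] using this
      rw [hmean, mul_zero]
    have hswap : ∫ ω, (∫ t, N (ω, t) ∂μ) ∂P = ∫ t, (∫ ω, N (ω, t) ∂P) ∂μ :=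
      integral_integral_swap (f := fun ω t => N (ω, t)) hNint
    set G : ℝ → ℝ := fun t => ∫ ω, N (ω, t) ∂P with hGdef
    have hGA : ∀ t ∈ A', 0 < G t := by
      intro t ht
      have heq : (fun ω => N (ω, t)) = fun ω => if 0 < B ω t then B ω m else 0 := by
        funext ω
        rw [hNdef]
        by_cases h : 0 < B ω t
        · rw [Set.indicator_of_mem (show (ω, t) ∈ S from ⟨ht, h⟩), if_pos h]
        · rw [Set.indicator_of_notMem (show (ω, t) ∉ S from fun hh => h hh.2), if_neg h]
      have := bb_cross_pos hB (hA'sub ht) hmIoo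
      rw [hGdef]
      simp only
      rw [heq]
      exact this
    have hGnn : ∀ t, 0 ≤ G t := by
      intro t
      by_cases ht : t ∈ A'
      · exact (hGA t ht).le
      · have heq : (fun ω => N (ω, t)) = fun _ => (0:ℝ) := by
          funext ω
          rw [hNdef, Set.indicator_of_notMem (show (ω, t) ∉ S from fun hh => ht hh.1)]
        rw [hGdef]
        simp only
        rw [heq, integral_const, smul_zero]
    have hGint : Integrable G μ := hNint.integral_prod_right
    have hG0 : ∫ t, G t ∂μ = 0 := by
      rw [hGdef, ← hswap, hLHS]
    have hGz := (integral_eq_zero_iff_of_nonneg_ae (Eventually.of_forall hGnn) hGint).mp hG0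
    have hnull : μ {t | G t ≠ 0} = 0 := ae_iff.mp hGz
    have hA'null : μ A' = 0 := measure_mono_null (fun t ht => (hGA t ht).ne') hnull
    rw [hμdef, Measure.restrict_apply hA'm,
      Set.inter_eq_self_of_subset_left hA'sub] at hA'null
    exact hA'vol hA'null
  · intro h
    refine ⟨0, Eventually.of_forall fun ω => ?_⟩
    exact measure_mono_null (fun t ht => ht.1) h
end
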